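/- Let B(k, 1/2) denote a binomial random variable with k trials and success probability 1/2. Then for every real t' with 0 ≤ t' ≤ k/8, Pr(B(k,1/2) ≥ k/2 + t') ≥ (1/15)·exp(−16 t'^2 / k). -/

import Mathlib

open scoped Classical

set_option maxRecDepth 40000
set_option maxHeartbeats 8000000

section AuxLemmas

lemma half (k : ℕ) : 2^k ≤ 2 * ∑ j ∈ (Finset.range (k+1)).filter (fun j => k ≤ 2*j), k.choose j := by
  set A := (Finset.range (k+1)).filter (fun j => ¬ k ≤ 2*j) with hA
  set B := (Finset.range (k+1)).filter (fun j => k ≤ 2*j) with hB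
  have hsplit : (∑ j ∈ B, k.choose j) + (∑ j ∈ A, k.choose j) = 2^k := by
    rw [hB, hA, Finset.sum_filter_add_sum_filter_not, Nat.sum_range_choose]
  have himg : ∑ j ∈ A.image (fun j => k - j), k.choose j = ∑ j ∈ A, k.choose j := by
    rw [Finset.sum_image (by intro x hx y hy hxy; simp only [hA, Finset.mem_coe, Finset.mem_filter, Finset.mem_range] at hx hy hxy; omega)]
    apply Finset.sum_congr rfl
    intro j hj
    simp only [hA, Finset.mem_filter, Finset.mem_range] at hj
    exact Nat.choose_symm (by omega)
  have hsub : A.image (fun j => k - j) ⊆ B := by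
    intro j hj
    simp only [Finset.mem_image, hA, Finset.mem_filter, Finset.mem_range] at hj
    obtain ⟨a, ⟨ha1, ha2⟩, rfl⟩ := hj
    simp only [hB, Finset.mem_filter, Finset.mem_range]
    omega
  have h2 : ∑ j ∈ A, k.choose j ≤ ∑ j ∈ B, k.choose j := by
    rw [← himg]
    exact Finset.sum_le_sum_of_subset hsub
  omega

lemma anti (k a b : ℕ) (h : k ≤ 2*a) (hab : a ≤ b) : k.choose b ≤ k.choose a := by
  induction b, hab using Nat.le_induction with
  | base => exact le_refl _
  | succ b hb ih =>
    refine le_trans ?_ ih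
    rcases le_or_gt k b with hkb | hbk
    · rw [Nat.choose_eq_zero_of_lt (by omega)]; exact Nat.zero_le _
    · have h1 := Nat.choose_succ_right_eq k b
      have h2 : k - b ≤ b + 1 := by omega
      have : k.choose (b+1) * (b+1) ≤ k.choose b * (b+1) :=
        h1 ▸ Nat.mul_le_mul_left _ h2
      exact Nat.le_of_mul_le_mul_right this (by omega)

lemma sqrt_mul_le_sqrt_mul (a b x y : ℝ) (ha : 0 ≤ a) (hb : 0 ≤ b)
    (h : a^2*x ≤ b^2*y) : a * Real.sqrt x ≤ b * Real.sqrt y := by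
  have h1 : a * Real.sqrt x = Real.sqrt (a^2*x) := by
    rw [Real.sqrt_mul (sq_nonneg a), Real.sqrt_sq ha]
  have h2 : b * Real.sqrt y = Real.sqrt (b^2*y) := by
    rw [Real.sqrt_mul (sq_nonneg b), Real.sqrt_sq hb]
  rw [h1, h2]
  exact Real.sqrt_le_sqrt h

lemma cb_ub (n : ℕ) : (Nat.centralBinom n : ℝ) * Real.sqrt (3*n+1) ≤ 4^n := by
  induction n with
  | zero => simp [Nat.centralBinom]
  | succ n ih =>
    push_cast
    have hrel : ((n:ℝ)+1) * Nat.centralBinom (n+1) = 2*(2*n+1) * Nat.centralBinom n := by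
      exact_mod_cast congrArg (Nat.cast : ℕ → ℝ) (Nat.succ_mul_centralBinom_succ n)
    have hs : (2*(2*(n:ℝ)+1)) * Real.sqrt (3*((n:ℝ)+1)+1) ≤ 4*((n:ℝ)+1) * Real.sqrt (3*n+1) := by
      apply sqrt_mul_le_sqrt_mul _ _ _ _ (by positivity) (by positivity)
      nlinarith [sq_nonneg ((n:ℝ))]
    have hcb : (0:ℝ) ≤ Nat.centralBinom n := Nat.cast_nonneg _
    have key : ((n:ℝ)+1) * ((Nat.centralBinom (n+1) : ℝ) * Real.sqrt (3*((n:ℝ)+1)+1)) ≤ ((n:ℝ)+1) * 4^(n+1) := by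
      calc ((n:ℝ)+1) * ((Nat.centralBinom (n+1) : ℝ) * Real.sqrt (3*((n:ℝ)+1)+1))
          = (2*(2*(n:ℝ)+1)) * Real.sqrt (3*((n:ℝ)+1)+1) * Nat.centralBinom n := by
            linear_combination Real.sqrt (3*((n:ℝ)+1)+1) * hrel
        _ ≤ 4*((n:ℝ)+1) * Real.sqrt (3*n+1) * Nat.centralBinom n :=
            mul_le_mul_of_nonneg_right hs hcb
        _ = 4*((n:ℝ)+1) * ((Nat.centralBinom n : ℝ) * Real.sqrt (3*n+1)) := by ring
        _ ≤ 4*((n:ℝ)+1) * 4^n := mul_le_mul_of_nonneg_left ih (by positivity)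
        _ = ((n:ℝ)+1) * 4^(n+1) := by ring
    exact le_of_mul_le_mul_left key (by positivity)

lemma cb_lb (n : ℕ) (hn : 1 ≤ n) : (4:ℝ)^n ≤ 2 * Real.sqrt n * Nat.centralBinom n := by
  induction n, hn using Nat.le_induction with
  | base => simp [Nat.centralBinom]; norm_num
  | succ n hn ih =>
    push_cast
    have hrel : ((n:ℝ)+1) * Nat.centralBinom (n+1) = 2*(2*n+1) * Nat.centralBinom n := by
      exact_mod_cast congrArg (Nat.cast : ℕ → ℝ) (Nat.succ_mul_centralBinom_succ n)
    have hs : 4*((n:ℝ)+1) * Real.sqrt n ≤ 2*(2*(n:ℝ)+1) * Real.sqrt ((n:ℝ)+1) := by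
      apply sqrt_mul_le_sqrt_mul _ _ _ _ (by positivity) (by positivity)
      nlinarith [sq_nonneg ((n:ℝ))]
    have hcb : (0:ℝ) ≤ Nat.centralBinom n := Nat.cast_nonneg _
    have key : ((n:ℝ)+1) * 4^(n+1) ≤ ((n:ℝ)+1) * (2 * Real.sqrt ((n:ℝ)+1) * Nat.centralBinom (n+1)) := by
      calc ((n:ℝ)+1) * 4^(n+1) = 4*((n:ℝ)+1) * 4^n := by ring
        _ ≤ 4*((n:ℝ)+1) * (2 * Real.sqrt n * Nat.centralBinom n) :=
            mul_le_mul_of_nonneg_left ih (by positivity)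
        _ = (4*((n:ℝ)+1) * Real.sqrt n) * (2 * Nat.centralBinom n) := by ring
        _ ≤ (2*(2*(n:ℝ)+1) * Real.sqrt ((n:ℝ)+1)) * (2 * Nat.centralBinom n) := by
            apply mul_le_mul_of_nonneg_right hs (by positivity)
        _ = ((n:ℝ)+1) * (2 * Real.sqrt ((n:ℝ)+1) * Nat.centralBinom (n+1)) := by
            linear_combination (-2) * Real.sqrt ((n:ℝ)+1) * hrel
    exact le_of_mul_le_mul_left key (by positivity)

lemma mid_le (n : ℕ) : (2*n+1).choose n ≤ 2 * Nat.centralBinom n := by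
  rcases Nat.eq_zero_or_pos n with rfl | hn
  · simp [Nat.centralBinom]
  · obtain ⟨p, rfl⟩ : ∃ p, n = p+1 := ⟨n-1, by omega⟩
    have h : (2*(p+1)+1).choose (p+1) = (2*(p+1)).choose p + (2*(p+1)).choose (p+1) :=
      Nat.choose_succ_succ' (2*(p+1)) p
    rw [h]
    have h1 : (2*(p+1)).choose p ≤ Nat.centralBinom (p+1) := Nat.choose_le_centralBinom p (p+1)
    have h2 : (2*(p+1)).choose (p+1) ≤ Nat.centralBinom (p+1) := Nat.choose_le_centralBinom (p+1) (p+1)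
    omega

lemma maxterm (k j : ℕ) : (k.choose j : ℝ) * Real.sqrt k ≤ 2^k := by
  have hmid : (k.choose j : ℝ) ≤ k.choose (k/2) := by
    exact_mod_cast Nat.choose_le_middle j k
  obtain ⟨n, rfl | rfl⟩ := Nat.even_or_odd' k
  · have h1 : ((2*n).choose (2*n/2) : ℝ) = Nat.centralBinom n := by
      rw [Nat.centralBinom]; norm_num
    have h2 : Real.sqrt (2*n : ℕ) ≤ Real.sqrt (3*n+1) := by
      apply Real.sqrt_le_sqrt; push_cast; linarith [Nat.cast_nonneg (α := ℝ) n]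
    calc ((2*n).choose j : ℝ) * Real.sqrt (2*n : ℕ)
        ≤ (Nat.centralBinom n : ℝ) * Real.sqrt (3*n+1) := by
          apply mul_le_mul (h1 ▸ hmid) h2 (Real.sqrt_nonneg _) (Nat.cast_nonneg _)
      _ ≤ 4^n := cb_ub n
      _ = 2^(2*n) := by rw [pow_mul]; norm_num
  · have hd : (2*n+1)/2 = n := by omega
    have hmid2 : ((2*n+1).choose ((2*n+1)/2) : ℝ) ≤ 2 * Nat.centralBinom n := by
      rw [hd]; exact_mod_cast mid_le n
    have h2 : Real.sqrt (2*n+1 : ℕ) ≤ Real.sqrt (3*n+1) := by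
      apply Real.sqrt_le_sqrt; push_cast; linarith [Nat.cast_nonneg (α := ℝ) n]
    calc ((2*n+1).choose j : ℝ) * Real.sqrt (2*n+1 : ℕ)
        ≤ (2 * Nat.centralBinom n : ℝ) * Real.sqrt (3*n+1) := by
          apply mul_le_mul (le_trans hmid hmid2) h2 (Real.sqrt_nonneg _) (by positivity)
      _ = 2 * ((Nat.centralBinom n : ℝ) * Real.sqrt (3*n+1)) := by push_cast; ring
      _ ≤ 2 * 4^n := by linarith [cb_ub n]
      _ = 2^(2*n+1) := by rw [pow_succ, pow_mul]; norm_num; ring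

lemma mid_ge (n : ℕ) : Nat.centralBinom n ≤ (2*n+1).choose (n+1) := by
  have h : (2*n+1).choose (n+1) = (2*n).choose n + (2*n).choose (n+1) :=
    Nat.choose_succ_succ (2*n) n
  rw [h, Nat.centralBinom]; omega

lemma central_lb (k : ℕ) (hk : 1 ≤ k) : (2:ℝ)^k ≤ 3 * Real.sqrt k * k.choose ((k+1)/2) := by
  obtain ⟨n, rfl | rfl⟩ := Nat.even_or_odd' k
  · have hn : 1 ≤ n := by omega
    have hd : (2*n+1)/2 = n := by omega
    have h1 : ((2*n).choose ((2*n+1)/2) : ℝ) = Nat.centralBinom n := by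
      rw [hd, Nat.centralBinom]
    rw [h1]
    have h2 : Real.sqrt n ≤ Real.sqrt (2*n : ℕ) := by
      apply Real.sqrt_le_sqrt; push_cast; linarith [Nat.cast_nonneg (α := ℝ) n]
    calc (2:ℝ)^(2*n) = 4^n := by rw [pow_mul]; norm_num
      _ ≤ 2 * Real.sqrt n * Nat.centralBinom n := cb_lb n hn
      _ ≤ 3 * Real.sqrt (2*n : ℕ) * Nat.centralBinom n := by
          have := Real.sqrt_nonneg (n:ℝ)
          have h3 : (0:ℝ) ≤ Nat.centralBinom n := Nat.cast_nonneg _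
          nlinarith [h2]
  · rcases Nat.eq_zero_or_pos n with rfl | hn
    · norm_num
    · have hd : (2*n+1+1)/2 = n+1 := by omega
      rw [hd]
      have hmg : (Nat.centralBinom n : ℝ) ≤ (2*n+1).choose (n+1) := by exact_mod_cast mid_ge n
      have h2 : 4 * Real.sqrt n ≤ 3 * Real.sqrt (2*n+1 : ℕ) := by
        apply sqrt_mul_le_sqrt_mul _ _ _ _ (by norm_num) (by norm_num)
        push_cast; nlinarith [show (1:ℝ) ≤ n from by exact_mod_cast hn]
      calc (2:ℝ)^(2*n+1) = 2 * 4^n := by rw [pow_succ, pow_mul]; norm_num; ring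
        _ ≤ 2 * (2 * Real.sqrt n * Nat.centralBinom n) := by linarith [cb_lb n hn]
        _ = (4 * Real.sqrt n) * Nat.centralBinom n := by ring
        _ ≤ (3 * Real.sqrt (2*n+1 : ℕ)) * Nat.centralBinom n := by
            apply mul_le_mul_of_nonneg_right h2 (Nat.cast_nonneg _)
        _ ≤ 3 * Real.sqrt (2*n+1 : ℕ) * (2*n+1).choose (n+1) := by
            apply mul_le_mul_of_nonneg_left hmg (by positivity)

lemma sum4 (i : ℕ) : ∑ a ∈ Finset.range i, (4*(a:ℝ)+4) = 2*(i:ℝ)*((i:ℝ)+1) := by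
  induction i with
  | zero => simp
  | succ n ihn => rw [Finset.sum_range_succ, ihn]; push_cast; ring

lemma ratio_aux (k : ℕ) (i : ℕ) (h2i : 2*i ≤ k) :
    (k.choose ((k+1)/2) : ℝ) * Real.exp (-∑ a ∈ Finset.range i, (4*(a:ℝ)+4)/((k:ℝ)-1-2*a))
      ≤ k.choose ((k+1)/2 + i) := by
  set c := (k+1)/2 with hc
  induction i with
  | zero => simp
  | succ i ih =>
    have h2i' : 2*i ≤ k := by omega
    have ih' := ih h2i'
    have hcik : c + i ≤ k := by omega
    have hki : (2*(i:ℝ) + 2) ≤ k := by exact_mod_cast (show 2*i+2 ≤ k by omega)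
    have hkpos : (0:ℝ) < (k:ℝ) - 1 - 2*i := by linarith
    have hcr1 : (k:ℝ) ≤ 2*c := by exact_mod_cast (show k ≤ 2*c by omega)
    have hcr2 : 2*(c:ℝ) ≤ k+1 := by exact_mod_cast (show 2*c ≤ k+1 by omega)
    set x := (4*(i:ℝ)+4)/((k:ℝ)-1-2*i) with hxdef
    have hxpos : (0:ℝ) < x := by positivity
    have hexp : Real.exp (-x) ≤ ((k:ℝ)-1-2*i)/((k:ℝ)+3+2*i) := by
      rw [Real.exp_neg]
      have h1x : (1:ℝ) + x ≤ Real.exp x := by linarith [Real.add_one_le_exp x]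
      have h1 : ((k:ℝ)+3+2*i)/((k:ℝ)-1-2*i) = 1 + x := by
        rw [hxdef]; field_simp; ring
      rw [← inv_div]
      apply inv_anti₀
      · rw [h1]; linarith
      · rw [h1]; exact h1x
    have hdenpos : (0:ℝ) < (c:ℝ)+i+1 := by positivity
    have hnumpos : (0:ℝ) ≤ (k:ℝ) - c - i := by linarith
    have hratio : ((k:ℝ)-1-2*i)/((k:ℝ)+3+2*i) ≤ ((k:ℝ)-c-i)/((c:ℝ)+i+1) := by
      rw [div_le_div_iff₀ (by linarith) hdenpos]
      nlinarith [hkpos]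
    have hrec : (k.choose (c+i+1) : ℝ) = (k.choose (c+i) : ℝ) * (((k:ℝ) - c - i)/((c:ℝ)+i+1)) := by
      have hcast := congrArg (Nat.cast : ℕ → ℝ) (Nat.choose_succ_right_eq k (c+i))
      push_cast [Nat.cast_sub hcik] at hcast
      rw [← mul_div_assoc, eq_div_iff (ne_of_gt hdenpos)]
      linear_combination hcast
    have hstep : (k.choose (c+i) : ℝ) * Real.exp (-x) ≤ k.choose (c+i+1) := by
      rw [hrec]
      apply mul_le_mul_of_nonneg_left (le_trans hexp hratio) (Nat.cast_nonneg _)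
    calc (k.choose c : ℝ) * Real.exp (-∑ a ∈ Finset.range (i+1), (4*(a:ℝ)+4)/((k:ℝ)-1-2*a))
        = ((k.choose c : ℝ) * Real.exp (-∑ a ∈ Finset.range i, (4*(a:ℝ)+4)/((k:ℝ)-1-2*a))) * Real.exp (-x) := by
          rw [Finset.sum_range_succ, neg_add, Real.exp_add]; ring
      _ ≤ (k.choose (c+i) : ℝ) * Real.exp (-x) := by
          apply mul_le_mul_of_nonneg_right ih' (Real.exp_nonneg _)
      _ ≤ k.choose (c+i+1) := hstep

lemma ratio (k i : ℕ) (h2i : 2*i ≤ k) :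
    (k.choose ((k+1)/2) : ℝ) * Real.exp (-(2*(i:ℝ)*((i:ℝ)+1))/((k:ℝ)+1-2*i))
      ≤ k.choose ((k+1)/2 + i) := by
  refine le_trans ?_ (ratio_aux k i h2i)
  apply mul_le_mul_of_nonneg_left _ (Nat.cast_nonneg _)
  apply Real.exp_le_exp.mpr
  rw [neg_div]
  apply neg_le_neg
  have hden : (0:ℝ) < (k:ℝ)+1-2*i := by
    have : (2*(i:ℝ)) ≤ k := by exact_mod_cast h2i
    linarith
  have hterm : ∀ a ∈ Finset.range i, (4*(a:ℝ)+4)/((k:ℝ)-1-2*a) ≤ (4*(a:ℝ)+4)/((k:ℝ)+1-2*i) := by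
    intro a ha
    simp only [Finset.mem_range] at ha
    have ha' : (a:ℝ) + 1 ≤ i := by exact_mod_cast ha
    apply div_le_div_of_nonneg_left (by positivity) hden (by linarith)
  calc ∑ a ∈ Finset.range i, (4*(a:ℝ)+4)/((k:ℝ)-1-2*a)
      ≤ ∑ a ∈ Finset.range i, (4*(a:ℝ)+4)/((k:ℝ)+1-2*i) := Finset.sum_le_sum hterm
    _ = (∑ a ∈ Finset.range i, (4*(a:ℝ)+4))/((k:ℝ)+1-2*i) := by rw [Finset.sum_div]
    _ = (2*(i:ℝ)*((i:ℝ)+1))/((k:ℝ)+1-2*i) := by rw [sum4]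


set_option maxRecDepth 100000 in
lemma small_cases : ∀ k ∈ Finset.Icc 1 79, ∀ m ∈ Finset.Icc ((k+1)/2) ((5*k+7)/8),
    k * 2^k ≤ 15 * (∑ j ∈ Finset.Icc m k, Nat.descFactorial k j / Nat.factorial j) * (k + 4*(2*m-2-k)^2) := by
  decide

lemma exp_nine_tenths : Real.exp (9/10) ≤ 5/2 := by
  nlinarith [Real.exp_one_lt_d9, Real.exp_pos (9/10), Real.exp_pos 1,
    sq_nonneg (Real.exp (9/10)), Real.add_one_le_exp (1/10 : ℝ),
    Real.exp_add (9/10) (1/10)]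

lemma polyA (w t : ℝ) (h80 : 80 ≤ w^2) (hw8 : 8 ≤ w) (ht0 : 0 ≤ t) (ht8 : 8*t ≤ w^2)
    (hreg : 13*w ≤ 30*(t+1)) :
    2*(t+w/2+1)*(t+w/2+2)*w^2 ≤ (16*t^2 + (9/10)*w^2)*(w^2-2*t-w-1) := by
  nlinarith [sq_nonneg (w - 8), sq_nonneg (t - w/2), mul_nonneg ht0 (by linarith : (0:ℝ) ≤ w), sq_nonneg w, sq_nonneg t,
    mul_nonneg (mul_nonneg ht0 ht0) (by linarith : (0:ℝ) ≤ w), sq_nonneg (30*t - 13*w + 30),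
    mul_nonneg ht0 (by linarith : (0:ℝ) ≤ w^2 - 8*t)]

lemma exp_neg_le_inv (y : ℝ) (hy : 0 ≤ y) : Real.exp (-y) ≤ 1/(1+y) := by
  rw [Real.exp_neg, one_div]
  apply inv_anti₀ (by linarith)
  linarith [Real.add_one_le_exp y]

end AuxLemmas

/-- Lower bound on the binomial upper tail: for `B(k, 1/2)` a binomial random
variable with `k` trials and success probability `1/2`, and `0 ≤ t' ≤ k/8`,
`Pr(B(k,1/2) ≥ k/2 + t') ≥ (1/15)·exp(-16 t'² / k)`. -/
theorem stmt18 (k : ℕ) (hk : 0 < k) (t' : ℝ) (h0 : 0 ≤ t') (h1 : t' ≤ (k : ℝ) / 8) :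
    (1 / 15) * Real.exp (-(16 * t' ^ 2) / k) ≤
      (∑ j ∈ (Finset.range (k + 1)).filter (fun j : ℕ => (k : ℝ) / 2 + t' ≤ (j : ℝ)),
        (k.choose j : ℝ)) / 2 ^ k := by
  have hk0 : (0:ℝ) < k := by exact_mod_cast hk
  have h2k : (0:ℝ) < 2^k := by positivity
  rw [le_div_iff₀ h2k]
  set F := (Finset.range (k + 1)).filter (fun j : ℕ => (k : ℝ) / 2 + t' ≤ (j : ℝ)) with hF
  set m := ⌈(k:ℝ)/2 + t'⌉₊ with hmdef
  have hm_ge : (k:ℝ)/2 + t' ≤ m := Nat.le_ceil _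
  have hm_lt : (m:ℝ) < (k:ℝ)/2 + t' + 1 := Nat.ceil_lt_add_one (by positivity)
  have h2mk : k ≤ 2*m := by
    have h : (k:ℝ) ≤ ((2*m : ℕ) : ℝ) := by push_cast; linarith
    exact_mod_cast h
  have hm8 : 8*m ≤ 5*k+7 := by
    have h : ((8*m : ℕ):ℝ) < ((5*k+8 : ℕ):ℝ) := by push_cast; linarith
    have := (Nat.cast_lt (α := ℝ)).mp h
    omega
  have hmk : m ≤ k := by omega
  have hexp_le_one : Real.exp (-(16 * t' ^ 2) / k) ≤ 1 := by
    rw [show (1:ℝ) = Real.exp 0 from (Real.exp_zero).symm]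
    apply Real.exp_le_exp.mpr
    rw [neg_div]
    have h00 : 0 ≤ 16*t'^2/(k:ℝ) := by positivity
    linarith
  by_cases hbig : 80 ≤ k
  · -- large k
    set w := Real.sqrt k with hwdef
    have hw2 : w^2 = k := Real.sq_sqrt hk0.le
    have hw0 : 0 < w := Real.sqrt_pos.mpr hk0
    have hw80 : (80:ℝ) ≤ w^2 := by rw [hw2]; exact_mod_cast hbig
    have hw8 : (8:ℝ) ≤ w := by nlinarith [hw0]
    by_cases hreg : t' + 1 ≤ (13/30)*w
    · -- case B : t' small
      set H := (Finset.range (k+1)).filter (fun j => k ≤ 2*j) with hH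
      have hFH : F ⊆ H := by
        intro j hj
        simp only [hF, Finset.mem_filter, Finset.mem_range] at hj
        simp only [hH, Finset.mem_filter, Finset.mem_range]
        refine ⟨hj.1, ?_⟩
        have : (k:ℝ) ≤ ((2*j : ℕ):ℝ) := by push_cast; linarith [hj.2]
        exact_mod_cast this
      have hsd : (∑ j ∈ H \ F, (k.choose j:ℝ)) + ∑ j ∈ F, (k.choose j:ℝ)
          = ∑ j ∈ H, (k.choose j:ℝ) := Finset.sum_sdiff hFH
      have hhalf : (2:ℝ)^k ≤ 2 * ∑ j ∈ H, (k.choose j:ℝ) := by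
        have := half k
        have hcast : ((2^k : ℕ):ℝ) ≤ ((2 * ∑ j ∈ H, k.choose j : ℕ):ℝ) := by exact_mod_cast this
        push_cast at hcast
        convert hcast using 2
      set c0 := (k+1)/2 with hc0
      have hc0r : (k:ℝ) ≤ 2*c0 := by
        have : k ≤ 2*c0 := by omega
        exact_mod_cast this
      have hsub2 : H \ F ⊆ Finset.Ico c0 (c0 + ⌊t'⌋₊ + 1) := by
        intro j hj
        rw [Finset.mem_sdiff] at hj
        obtain ⟨hjH, hjF⟩ := hj
        simp only [hH, Finset.mem_filter, Finset.mem_range] at hjH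
        have hjlt : (j:ℝ) < (k:ℝ)/2 + t' := by
          by_contra hcon
          push_neg at hcon
          exact hjF (by simp only [hF, Finset.mem_filter, Finset.mem_range]; exact ⟨hjH.1, hcon⟩)
        have hjc0 : c0 ≤ j := by omega
        have hd : ((j - c0 : ℕ):ℝ) ≤ t' := by
          push_cast [Nat.cast_sub hjc0]
          have : ((c0:ℝ)) ≥ (k:ℝ)/2 := by linarith
          linarith
        have : j - c0 ≤ ⌊t'⌋₊ := Nat.le_floor hd
        rw [Finset.mem_Ico]
        omega
      have hcard : (H \ F).card ≤ ⌊t'⌋₊ + 1 := by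
        calc (H \ F).card ≤ (Finset.Ico c0 (c0 + ⌊t'⌋₊ + 1)).card := Finset.card_le_card hsub2
          _ = ⌊t'⌋₊ + 1 := by rw [Nat.card_Ico]; omega
      have hterm : ∀ j ∈ H \ F, (k.choose j : ℝ) ≤ 2^k / w := by
        intro j _
        rw [le_div_iff₀ hw0]
        exact maxterm k j
      have hsum_sdiff : ∑ j ∈ H \ F, (k.choose j:ℝ) ≤ (13/30) * 2^k := by
        calc ∑ j ∈ H \ F, (k.choose j:ℝ) ≤ (H \ F).card • (2^k / w) :=
              Finset.sum_le_card_nsmul _ _ _ hterm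
          _ = ((H \ F).card : ℝ) * (2^k / w) := by rw [nsmul_eq_mul]
          _ ≤ (t' + 1) * (2^k / w) := by
              apply mul_le_mul_of_nonneg_right _ (by positivity)
              calc ((H \ F).card : ℝ) ≤ ((⌊t'⌋₊ + 1 : ℕ):ℝ) := by exact_mod_cast hcard
                _ ≤ t' + 1 := by push_cast; linarith [Nat.floor_le h0]
          _ ≤ ((13/30)*w) * (2^k / w) := by
              apply mul_le_mul_of_nonneg_right (by linarith) (by positivity)
          _ = (13/30) * 2^k := by field_simp
      calc 1/15 * Real.exp (-(16 * t' ^ 2) / k) * 2^k ≤ 1/15 * 1 * 2^k := by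
            apply mul_le_mul_of_nonneg_right _ h2k.le
            apply mul_le_mul_of_nonneg_left hexp_le_one (by norm_num)
        _ = (1/2) * 2^k - (13/30) * 2^k - (1/15) * 2^k + (1/15) * 2^k := by ring
        _ ≤ ∑ j ∈ F, (k.choose j:ℝ) := by linarith [hsum_sdiff, hsd, hhalf]
    · -- case A : t' large
      push_neg at hreg
      set s := ⌈w/2⌉₊ with hsdef
      have hs1 : 1 ≤ s := by
        rw [hsdef]
        exact Nat.one_le_iff_ne_zero.mpr (by positivity)
      have hs_ge : w/2 ≤ (s:ℝ) := Nat.le_ceil _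
      have hs_lt : (s:ℝ) < w/2 + 1 := Nat.ceil_lt_add_one (by positivity)
      set c := (k+1)/2 with hcdef
      have hcm : c ≤ m := by omega
      have hcr1 : (k:ℝ) ≤ 2*c := by exact_mod_cast (show k ≤ 2*c by omega)
      have hcr2 : 2*(c:ℝ) ≤ (k:ℝ)+1 := by exact_mod_cast (show 2*c ≤ k+1 by omega)
      set M := m + s - 1 with hMdef
      have hMc : c ≤ M := by omega
      set i := M - c with hidef
      have hMci : M = c + i := by omega
      have hMr : (M:ℝ) < (k:ℝ)/2 + t' + w/2 + 1 := by
        have hMr0 : (M:ℝ) = (m:ℝ) + (s:ℝ) - 1 := by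
          have : M + 1 = m + s := by omega
          have := congrArg (Nat.cast : ℕ → ℝ) this
          push_cast at this
          linarith
        rw [hMr0]; linarith
      have hir : (i:ℝ) < t' + w/2 + 1 := by
        have : (i:ℝ) = (M:ℝ) - (c:ℝ) := by
          rw [hidef]; push_cast [Nat.cast_sub hMc]; ring
        rw [this]; linarith
      have h8w : (0:ℝ) ≤ w * (w - 8) := mul_nonneg hw0.le (by linarith)
      have hwk : w ≤ (k:ℝ)/8 := by nlinarith [h8w, hw2]
      have h2i : 2*i ≤ k := by
        have : ((2*i : ℕ):ℝ) < (k:ℝ) := by push_cast; nlinarith [hir, hwk, h1, hw0]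
        have := (Nat.cast_lt (α := ℝ)).mp (by exact_mod_cast this : ((2*i:ℕ):ℝ) < ((k:ℕ):ℝ))
        omega
      have hMk : M ≤ k := by
        have : (M:ℝ) < (k:ℝ) + 1 := by
          have : (k:ℝ)/2 + t' + w/2 + 1 ≤ (k:ℝ) + 1 := by nlinarith [hwk, h1, hw0]
          linarith
        have := (Nat.cast_lt (α := ℝ)).mp (by exact_mod_cast this : ((M:ℕ):ℝ) < ((k+1:ℕ):ℝ))
        omega
      -- sum lower bound by s terms
      have hsub : Finset.Ico m (m+s) ⊆ F := by
        intro j hj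
        rw [Finset.mem_Ico] at hj
        simp only [hF, Finset.mem_filter, Finset.mem_range]
        constructor
        · omega
        · have : (m:ℝ) ≤ j := by exact_mod_cast hj.1
          linarith
      have hterm : ∀ j ∈ Finset.Ico m (m+s), (k.choose M : ℝ) ≤ (k.choose j : ℝ) := by
        intro j hj
        rw [Finset.mem_Ico] at hj
        have : k.choose M ≤ k.choose j := anti k j M (by omega) (by omega)
        exact_mod_cast this
      have hS1 : (s:ℝ) * (k.choose M : ℝ) ≤ ∑ j ∈ F, (k.choose j:ℝ) := by
        calc (s:ℝ) * (k.choose M : ℝ) = (Finset.Ico m (m+s)).card • (k.choose M : ℝ) := by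
              rw [Nat.card_Ico, show m + s - m = s by omega, nsmul_eq_mul]
          _ ≤ ∑ j ∈ Finset.Ico m (m+s), (k.choose j:ℝ) := Finset.card_nsmul_le_sum _ _ _ hterm
          _ ≤ ∑ j ∈ F, (k.choose j:ℝ) := by
              apply Finset.sum_le_sum_of_subset_of_nonneg hsub
              intros; positivity
      -- choose M lower bound
      have hratio := ratio k i h2i
      rw [← hcdef, ← hMci] at hratio
      have hclb := central_lb k hk
      rw [← hcdef, ← hwdef] at hclb
      -- E bound
      set E := (2*(i:ℝ)*((i:ℝ)+1))/((k:ℝ)+1-2*i) with hEdef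
      have hden1 : (0:ℝ) < (k:ℝ) - 2*t' - w - 1 := by nlinarith [hwk, h1, hk0, hw8, hw2]
      have hden2 : (k:ℝ) - 2*t' - w - 1 ≤ (k:ℝ)+1-2*i := by linarith
      have hi0 : (0:ℝ) ≤ i := Nat.cast_nonneg _
      have hE1 : E ≤ (2*(t'+w/2+1)*(t'+w/2+2))/((k:ℝ) - 2*t' - w - 1) := by
        apply div_le_div₀ (by positivity) _ hden1 hden2
        nlinarith [hir, hi0, h0, hw0]
      have hkey : 2*(t'+w/2+1)*(t'+w/2+2)*w^2 ≤ (16*t'^2 + (9/10)*w^2)*(w^2-2*t'-w-1) :=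
        polyA w t' hw80 hw8 h0 (by linarith) (by linarith)
      have hE2 : (2*(t'+w/2+1)*(t'+w/2+2))/((k:ℝ) - 2*t' - w - 1) ≤ 16*t'^2/(k:ℝ) + 9/10 := by
        rw [div_le_iff₀ hden1]
        have hkw : (k:ℝ) = w^2 := hw2.symm
        rw [hkw]
        rw [div_add' _ _ _ (by positivity), div_mul_eq_mul_div, le_div_iff₀ (by positivity)]
        nlinarith [hkey]
      have hE : E ≤ 16*t'^2/(k:ℝ) + 9/10 := le_trans hE1 hE2
      have hCc : (2:ℝ)^k/(3*w) ≤ (k.choose c : ℝ) := by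
        rw [div_le_iff₀ (by positivity)]
        calc (2:ℝ)^k ≤ 3 * w * (k.choose c : ℝ) := hclb
          _ = (k.choose c : ℝ) * (3*w) := by ring
      have hratio' : (k.choose c:ℝ) * Real.exp (-E) ≤ (k.choose M:ℝ) := by
        rw [hMci]
        calc (k.choose c:ℝ) * Real.exp (-E) = (k.choose c:ℝ) * Real.exp (-(2*(i:ℝ)*((i:ℝ)+1))/((k:ℝ)+1-2*i)) := by
              rw [hEdef, neg_div]
          _ ≤ (k.choose (c+i) : ℝ) := ratio k i h2i
      have hCM : (1/6) * 2^k * Real.exp (-E) ≤ (s:ℝ) * (k.choose M:ℝ) := by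
        have hstep1 : (1/6) * (2:ℝ)^k = (w/2) * ((2:ℝ)^k/(3*w)) := by
          field_simp
          ring
        calc (1/6) * (2:ℝ)^k * Real.exp (-E) = (w/2) * ((2:ℝ)^k/(3*w)) * Real.exp (-E) := by rw [hstep1]
          _ ≤ (s:ℝ) * ((2:ℝ)^k/(3*w)) * Real.exp (-E) := by
              apply mul_le_mul_of_nonneg_right (mul_le_mul_of_nonneg_right hs_ge (by positivity)) (Real.exp_nonneg _)
          _ ≤ (s:ℝ) * (k.choose c:ℝ) * Real.exp (-E) := by
              apply mul_le_mul_of_nonneg_right (mul_le_mul_of_nonneg_left hCc (Nat.cast_nonneg _)) (Real.exp_nonneg _)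
          _ = (s:ℝ) * ((k.choose c:ℝ) * Real.exp (-E)) := by ring
          _ ≤ (s:ℝ) * (k.choose M:ℝ) := mul_le_mul_of_nonneg_left hratio' (Nat.cast_nonneg _)
      -- final chain
      have hexpE : Real.exp (-(16 * t' ^ 2) / k) * (2/5) ≤ Real.exp (-E) := by
        have h1 : Real.exp (-(16 * t' ^ 2) / k) * (2/5) ≤ Real.exp (-(16 * t' ^ 2) / k) * Real.exp (-(9/10)) := by
          apply mul_le_mul_of_nonneg_left _ (Real.exp_nonneg _)
          rw [Real.exp_neg]
          rw [le_inv_comm₀ (by norm_num) (Real.exp_pos _)]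
          calc Real.exp (9/10) ≤ 5/2 := exp_nine_tenths
            _ = (2/5 : ℝ)⁻¹ := by norm_num
        calc Real.exp (-(16 * t' ^ 2) / k) * (2/5) ≤ Real.exp (-(16 * t' ^ 2) / k) * Real.exp (-(9/10)) := h1
          _ = Real.exp (-(16 * t' ^ 2) / k - 9/10) := by rw [← Real.exp_add]; ring_nf
          _ ≤ Real.exp (-E) := by
              apply Real.exp_le_exp.mpr
              rw [neg_div]
              linarith
      calc 1/15 * Real.exp (-(16 * t' ^ 2) / k) * 2^k
          = (Real.exp (-(16 * t' ^ 2) / k) * (2/5)) * ((1/6) * 2^k) := by ring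
        _ ≤ Real.exp (-E) * ((1/6) * 2^k) := by
            apply mul_le_mul_of_nonneg_right hexpE (by positivity)
        _ = (1/6) * 2^k * Real.exp (-E) := by ring
        _ ≤ (s:ℝ) * (k.choose M:ℝ) := hCM
        _ ≤ ∑ j ∈ F, (k.choose j:ℝ) := hS1
  · -- small k
    push_neg at hbig
    have hsub : Finset.Icc m k ⊆ F := by
      intro j hj
      rw [Finset.mem_Icc] at hj
      simp only [hF, Finset.mem_filter, Finset.mem_range]
      refine ⟨by omega, ?_⟩
      have : (m:ℝ) ≤ j := by exact_mod_cast hj.1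
      linarith
    have hS1 : ∑ j ∈ Finset.Icc m k, (k.choose j : ℝ) ≤ ∑ j ∈ F, (k.choose j:ℝ) := by
      apply Finset.sum_le_sum_of_subset_of_nonneg hsub
      intros; positivity
    set e := 2*m-2-k with hedef
    have hnat : k * 2^k ≤ 15 * (∑ j ∈ Finset.Icc m k, k.choose j) * (k + 4*e^2) := by
      have h := small_cases k (Finset.mem_Icc.mpr ⟨hk, by omega⟩) m (Finset.mem_Icc.mpr ⟨by omega, by omega⟩)
      have he : ∀ j, Nat.descFactorial k j / Nat.factorial j = k.choose j := by
        intro j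
        rw [Nat.choose_eq_descFactorial_div_factorial]
      simp only [he] at h
      rw [← hedef] at h
      exact h
    have hreal : (k:ℝ) * 2^k ≤ 15 * (∑ j ∈ Finset.Icc m k, (k.choose j:ℝ)) * ((k:ℝ) + 4*(e:ℝ)^2) := by
      have : ((k * 2^k : ℕ):ℝ) ≤ ((15 * (∑ j ∈ Finset.Icc m k, k.choose j) * (k + 4*e^2) : ℕ):ℝ) := by
        exact_mod_cast hnat
      push_cast at this
      convert this using 2 <;> norm_num
    clear hnat
    have he2 : (e:ℝ) ≤ 2*t' := by
      rcases le_or_gt (2*m) (k+2) with h | h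
      · have he0 : e = 0 := by omega
        rw [he0]; push_cast; linarith
      · have he' : e + (2+k) = 2*m := by omega
        have := congrArg (Nat.cast : ℕ → ℝ) he'
        push_cast at this
        linarith
    have he0 : (0:ℝ) ≤ e := Nat.cast_nonneg _
    have hden : (0:ℝ) < (k:ℝ)+4*(e:ℝ)^2 := by positivity
    have hxe : Real.exp (-(16*t'^2)/k) ≤ (k:ℝ)/((k:ℝ)+4*(e:ℝ)^2) := by
      have h1 : Real.exp (-(16*t'^2)/k) ≤ Real.exp (-(4*(e:ℝ)^2/k)) := by
        apply Real.exp_le_exp.mpr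
        rw [neg_div]
        apply neg_le_neg
        apply (div_le_div_iff_of_pos_right hk0).mpr
        linarith [pow_le_pow_left₀ he0 he2 2]
      have h2 := exp_neg_le_inv (4*(e:ℝ)^2/k) (by positivity)
      have h3 : 1/(1+4*(e:ℝ)^2/k) = (k:ℝ)/((k:ℝ)+4*(e:ℝ)^2) := by
        field_simp
      exact h1.trans (h2.trans h3.le)
    calc 1/15 * Real.exp (-(16 * t' ^ 2) / k) * 2^k
        ≤ 1/15 * ((k:ℝ)/((k:ℝ)+4*(e:ℝ)^2)) * 2^k := by
          apply mul_le_mul_of_nonneg_right _ h2k.le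
          apply mul_le_mul_of_nonneg_left hxe (by norm_num)
      _ = ((k:ℝ) * 2^k)/(15*((k:ℝ)+4*(e:ℝ)^2)) := by
          field_simp
      _ ≤ ∑ j ∈ Finset.Icc m k, (k.choose j : ℝ) := by
          rw [div_le_iff₀ (by positivity)]
          calc (k:ℝ)*2^k ≤ 15 * (∑ j ∈ Finset.Icc m k, (k.choose j:ℝ)) * ((k:ℝ) + 4*(e:ℝ)^2) := hreal
            _ = (∑ j ∈ Finset.Icc m k, (k.choose j:ℝ)) * (15*((k:ℝ) + 4*(e:ℝ)^2)) := by ring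
      _ ≤ ∑ j ∈ F, (k.choose j:ℝ) := hS1
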